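/- There exists a constant C such that for every n ≥ 1 and every sequence w_1, …, w_n of positive integers with W = w_1 + … + w_n, there exists a full binary tree T with exactly n leaves such that for each i (1 ≤ i ≤ n), the depth of the i-th leaf of T in left-to-right order is at most C · (1 + Nat.log 2 (W / w_i)). -/

import Mathlib

/-- Full binary trees. -/
inductive FullBinTree : Type
  | leaf : FullBinTree
  | node : FullBinTree → FullBinTree → FullBinTree

/-- The list of depths of the leaves of a full binary tree, in left-to-right
    order. -/
def leafDepths : FullBinTree → List ℕ
  | .leaf => [0]
  | .node l r => (leafDepths l).map (· + 1) ++ (leafDepths r).map (· + 1)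

/-- round `x` up to a multiple of `d`. -/
def alignUp (x d : ℕ) : ℕ := d * ((x + d - 1) / d)

lemma le_alignUp (x : ℕ) {d : ℕ} (hd : 0 < d) : x ≤ alignUp x d := by
  have h1 := Nat.div_add_mod (x + d - 1) d
  have h2 := Nat.mod_lt (x + d - 1) hd
  unfold alignUp
  omega

lemma alignUp_le (x : ℕ) {d : ℕ} (hd : 0 < d) : alignUp x d ≤ x + d := by
  have h1 := Nat.div_add_mod (x + d - 1) d
  have h2 := Nat.mod_lt (x + d - 1) hd
  unfold alignUp
  omega

lemma dvd_alignUp (x d : ℕ) : d ∣ alignUp x d := Dvd.intro _ rfl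

/-- cumulative interval endpoints -/
def endsOf (d : ℕ → ℕ) : ℕ → ℕ
  | 0 => 0
  | i + 1 => alignUp (endsOf d i) (d i) + d i

lemma pred_head_dropWhile {α : Type*} {p : α → Bool} :
    ∀ {l : List α} {x : α} {xs : List α}, l.dropWhile p = x :: xs → p x = false := by
  intro l
  induction l with
  | nil => intro x xs h; simp [List.dropWhile] at h
  | cons a t iht =>
    intro x xs h
    rw [List.dropWhile_cons] at h
    split at h
    · exact iht h
    · rename_i hf
      cases h
      simpa using hf

lemma all_snd_pos (L : ℕ) (p q : ℕ × ℕ) (t : List (ℕ × ℕ))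
    (hmem : ∀ r ∈ p :: q :: t, r.2 ≤ L ∧ 2 ^ (L - r.2) ∣ r.1 ∧ r.1 + 2 ^ (L - r.2) ≤ 2 ^ L)
    (hpw : (p :: q :: t).Pairwise (fun a b => a.1 + 2 ^ (L - a.2) ≤ b.1)) :
    ∀ r ∈ p :: q :: t, 1 ≤ r.2 := by
  intro r hr
  by_contra hcon
  have hr2 : r.2 = 0 := by omega
  obtain ⟨-, -, hle⟩ := hmem r hr
  rw [hr2, Nat.sub_zero] at hle
  have hr1 : r.1 = 0 := by omega
  have hpq : p.1 + 2 ^ (L - p.2) ≤ q.1 := (List.pairwise_cons.mp hpw).1 q (by simp)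
  rcases List.mem_cons.mp hr with rfl | hr'
  · obtain ⟨-, -, hq⟩ := hmem q (by simp)
    have := Nat.two_pow_pos (L - q.2)
    rw [hr2, Nat.sub_zero, hr1] at hpq
    omega
  · have hpr : p.1 + 2 ^ (L - p.2) ≤ r.1 := (List.pairwise_cons.mp hpw).1 r (by simp [hr'])
    have := Nat.two_pow_pos (L - p.2)
    omega

lemma treeOfIntervals (L : ℕ) : ∀ ps : List (ℕ × ℕ), ps ≠ [] →
    (∀ p ∈ ps, p.2 ≤ L ∧ 2 ^ (L - p.2) ∣ p.1 ∧ p.1 + 2 ^ (L - p.2) ≤ 2 ^ L) →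
    ps.Pairwise (fun p q => p.1 + 2 ^ (L - p.2) ≤ q.1) →
    ∃ T : FullBinTree, (leafDepths T).length = ps.length ∧
      ∀ i < ps.length, (leafDepths T).getD i 0 ≤ (ps.getD i (0, 0)).2 := by
  induction L with
  | zero =>
    rintro (_ | ⟨p, _ | ⟨q, t⟩⟩) hne hmem hpw
    · exact absurd rfl hne
    · refine ⟨.leaf, by simp [leafDepths], ?_⟩
      intro i hilt
      have hi0 : i = 0 := by simpa using hilt
      subst hi0
      simp [leafDepths]
    · have h1 := all_snd_pos 0 p q t hmem hpw p (by simp)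
      have h2 := (hmem p (by simp)).1
      omega
  | succ M ih =>
    rintro (_ | ⟨p, _ | ⟨q, t⟩⟩) hne hmem hpw
    · exact absurd rfl hne
    · refine ⟨.leaf, by simp [leafDepths], ?_⟩
      intro i hilt
      have hi0 : i = 0 := by simpa using hilt
      subst hi0
      simp [leafDepths]
    · set ps : List (ℕ × ℕ) := p :: q :: t with hps
      have hℓ1 : ∀ r ∈ ps, 1 ≤ r.2 := all_snd_pos _ p q t hmem hpw
      set pred : ℕ × ℕ → Bool := fun r => decide (r.1 < 2 ^ M) with hpred
      set lo := ps.takeWhile pred with hlo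
      set hi := ps.dropWhile pred with hhi
      have hsplit : lo ++ hi = ps := List.takeWhile_append_dropWhile
      have hlo_sub : ∀ r ∈ lo, r ∈ ps := fun r hr => (List.takeWhile_sublist pred).subset hr
      have hhi_sub : ∀ r ∈ hi, r ∈ ps := fun r hr => (List.dropWhile_sublist pred).subset hr
      have hlo_lt : ∀ r ∈ lo, r.1 < 2 ^ M := by
        intro r hr
        have := List.mem_takeWhile_imp hr
        simpa [hpred] using this
      have hhi_ge : ∀ r ∈ hi, 2 ^ M ≤ r.1 := by
        intro r hr
        have hpwhi : hi.Pairwise (fun a b => a.1 + 2 ^ (M + 1 - a.2) ≤ b.1) :=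
          List.Pairwise.sublist (List.dropWhile_sublist pred) hpw
        rcases hd : hi with _ | ⟨h0, t0⟩
        · rw [hd] at hr; simp at hr
        · have hh0 : pred h0 = false := pred_head_dropWhile (hhi ▸ hd)
          have hh0' : 2 ^ M ≤ h0.1 := by simpa [hpred] using hh0
          rw [hd] at hr hpwhi
          rcases List.mem_cons.mp hr with rfl | hr'
          · exact hh0'
          · have h3 := (List.pairwise_cons.mp hpwhi).1 r hr'
            have := Nat.two_pow_pos (M + 1 - h0.2)
            omega
      have hexp : ∀ r ∈ ps, 2 ^ (M - (r.2 - 1)) = 2 ^ (M + 1 - r.2) := by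
        intro r hr
        have h1 := hℓ1 r hr
        have h2 := (hmem r hr).1
        congr 1
        omega
      have hlo_end : ∀ r ∈ lo, r.1 + 2 ^ (M + 1 - r.2) ≤ 2 ^ M := by
        intro r hr
        have hrps := hlo_sub r hr
        obtain ⟨h2, hdvd, -⟩ := hmem r hrps
        have h1 := hℓ1 r hrps
        have hlt := hlo_lt r hr
        have hdvd2 : (2:ℕ) ^ (M + 1 - r.2) ∣ 2 ^ M := pow_dvd_pow 2 (by omega)
        have hdd : (2:ℕ) ^ (M + 1 - r.2) ∣ 2 ^ M - r.1 := Nat.dvd_sub hdvd2 hdvd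
        have := Nat.le_of_dvd (by omega) hdd
        omega
      set glo : ℕ × ℕ → ℕ × ℕ := fun r => (r.1, r.2 - 1) with hglo
      set ghi : ℕ × ℕ → ℕ × ℕ := fun r => (r.1 - 2 ^ M, r.2 - 1) with hghi
      have hmem_lo : ∀ r ∈ lo.map glo,
          r.2 ≤ M ∧ 2 ^ (M - r.2) ∣ r.1 ∧ r.1 + 2 ^ (M - r.2) ≤ 2 ^ M := by
        intro r hr
        obtain ⟨s, hs, rfl⟩ := List.mem_map.mp hr
        have hsps := hlo_sub s hs
        obtain ⟨h2, hdvd, -⟩ := hmem s hsps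
        have h1 := hℓ1 s hsps
        have hE := hexp s hsps
        refine ⟨by simp [hglo]; omega, ?_, ?_⟩
        · simpa [hglo, hE] using hdvd
        · have := hlo_end s hs
          simpa [hglo, hE] using this
      have hmem_hi : ∀ r ∈ hi.map ghi,
          r.2 ≤ M ∧ 2 ^ (M - r.2) ∣ r.1 ∧ r.1 + 2 ^ (M - r.2) ≤ 2 ^ M := by
        intro r hr
        obtain ⟨s, hs, rfl⟩ := List.mem_map.mp hr
        have hsps := hhi_sub s hs
        obtain ⟨h2, hdvd, hle⟩ := hmem s hsps
        have h1 := hℓ1 s hsps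
        have hE := hexp s hsps
        have hge := hhi_ge s hs
        have hdvd2 : (2:ℕ) ^ (M + 1 - s.2) ∣ 2 ^ M := pow_dvd_pow 2 (by omega)
        refine ⟨by simp [hghi]; omega, ?_, ?_⟩
        · simp only [hghi, hE]
          exact Nat.dvd_sub hdvd hdvd2
        · have hpow : (2:ℕ) ^ (M + 1) = 2 ^ M * 2 := pow_succ 2 M
          simp only [hghi, hE]
          omega
      have hpw_lo : (lo.map glo).Pairwise (fun a b => a.1 + 2 ^ (M - a.2) ≤ b.1) := by
        rw [List.pairwise_map]
        refine List.Pairwise.imp_of_mem ?_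
          (List.Pairwise.sublist (List.takeWhile_sublist pred) hpw)
        intro a b ha hb hab
        have hE := hexp a (hlo_sub a ha)
        simpa [hglo, hE] using hab
      have hpw_hi : (hi.map ghi).Pairwise (fun a b => a.1 + 2 ^ (M - a.2) ≤ b.1) := by
        rw [List.pairwise_map]
        refine List.Pairwise.imp_of_mem ?_
          (List.Pairwise.sublist (List.dropWhile_sublist pred) hpw)
        intro a b ha hb hab
        have hE := hexp a (hhi_sub a ha)
        have hga := hhi_ge a ha
        have hgb := hhi_ge b hb
        simp only [hghi, hE]
        omega
      by_cases hloe : lo = []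
      · -- everything in upper half
        have hips : hi = ps := by rw [← hsplit, hloe]; rfl
        rw [hips] at hmem_hi hpw_hi
        obtain ⟨T, hlen, hbd⟩ := ih (ps.map ghi) (by simp [hps]) hmem_hi hpw_hi
        have hlenT : (leafDepths T).length = ps.length := by rw [hlen]; simp
        refine ⟨T, hlenT, ?_⟩
        intro i hilt
        have hiT : i < (leafDepths T).length := by rw [hlenT]; exact hilt
        have hilt' : i < (ps.map ghi).length := by simpa using hilt
        have h1 := hbd i hilt'
        rw [List.getD_eq_getElem _ _ hilt', List.getElem_map,
          List.getD_eq_getElem _ _ hiT] at h1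
        rw [List.getD_eq_getElem _ _ hiT, List.getD_eq_getElem _ _ hilt]
        simp only [hghi] at h1
        omega
      · by_cases hhie : hi = []
        · have hlps : lo = ps := by rw [← hsplit, hhie, List.append_nil]
          rw [hlps] at hmem_lo hpw_lo
          obtain ⟨T, hlen, hbd⟩ := ih (ps.map glo) (by simp [hps]) hmem_lo hpw_lo
          have hlenT : (leafDepths T).length = ps.length := by rw [hlen]; simp
          refine ⟨T, hlenT, ?_⟩
          intro i hilt
          have hiT : i < (leafDepths T).length := by rw [hlenT]; exact hilt
          have hilt' : i < (ps.map glo).length := by simpa using hilt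
          have h1 := hbd i hilt'
          rw [List.getD_eq_getElem _ _ hilt', List.getElem_map,
            List.getD_eq_getElem _ _ hiT] at h1
          rw [List.getD_eq_getElem _ _ hiT, List.getD_eq_getElem _ _ hilt]
          simp only [hglo] at h1
          omega
        · -- both nonempty: make a node
          obtain ⟨Tl, hlenl, hbdl⟩ := ih (lo.map glo) (by simpa using hloe) hmem_lo hpw_lo
          obtain ⟨Tr, hlenr, hbdr⟩ := ih (hi.map ghi) (by simpa using hhie) hmem_hi hpw_hi
          have hlenl' : (leafDepths Tl).length = lo.length := by rw [hlenl]; simp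
          have hlenr' : (leafDepths Tr).length = hi.length := by rw [hlenr]; simp
          have hlenps : lo.length + hi.length = ps.length := by
            rw [← hsplit, List.length_append]
          have hdep : leafDepths (FullBinTree.node Tl Tr)
              = (leafDepths Tl).map (· + 1) ++ (leafDepths Tr).map (· + 1) := rfl
          have hlenN : (leafDepths (FullBinTree.node Tl Tr)).length = ps.length := by
            rw [hdep]
            simp only [List.length_append, List.length_map, hlenl', hlenr']
            exact hlenps
          refine ⟨.node Tl Tr, hlenN, ?_⟩
          intro i hilt
          have hiN : i < (leafDepths (FullBinTree.node Tl Tr)).length := by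
            rw [hlenN]; exact hilt
          rw [List.getD_eq_getElem _ _ hiN, List.getD_eq_getElem _ _ hilt]
          have hml : ((leafDepths Tl).map (· + 1)).length = lo.length := by
            simp [hlenl']
          by_cases hc : i < lo.length
          · have hiTl : i < (leafDepths Tl).length := by rw [hlenl']; exact hc
            have hiTlm : i < ((leafDepths Tl).map (· + 1)).length := by rw [hml]; exact hc
            have e1 : (leafDepths (FullBinTree.node Tl Tr))[i]'hiN
                = (leafDepths Tl)[i]'hiTl + 1 := by
              simp only [hdep]
              rw [List.getElem_append_left hiTlm, List.getElem_map]
            have hilt' : i < (lo.map glo).length := by simpa using hc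
            have h1 := hbdl i hilt'
            rw [List.getD_eq_getElem _ _ hilt', List.getElem_map,
              List.getD_eq_getElem _ _ hiTl] at h1
            have e2 : ps[i]'hilt = lo[i]'hc := by
              rw [List.getElem_of_eq hsplit.symm hilt]
              exact List.getElem_append_left hc
            have h2 := hℓ1 _ (hlo_sub _ (List.getElem_mem hc))
            rw [e1, e2]
            simp only [hglo] at h1
            omega
          · have hge : lo.length ≤ i := by omega
            have hj : i - lo.length < hi.length := by omega
            have hiTr : i - lo.length < (leafDepths Tr).length := by rw [hlenr']; exact hj
            have e1 : (leafDepths (FullBinTree.node Tl Tr))[i]'hiN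
                = (leafDepths Tr)[i - lo.length]'hiTr + 1 := by
              simp only [hdep]
              rw [List.getElem_append_right (by rw [hml]; exact hge), List.getElem_map]
              simp only [List.length_map, hlenl']
            have hilt' : i - lo.length < (hi.map ghi).length := by simpa using hj
            have h1 := hbdr (i - lo.length) hilt'
            rw [List.getD_eq_getElem _ _ hilt', List.getElem_map,
              List.getD_eq_getElem _ _ hiTr] at h1
            have e2 : ps[i]'hilt = hi[i - lo.length]'hj := by
              rw [List.getElem_of_eq hsplit.symm hilt]
              exact List.getElem_append_right hge
            have h2 := hℓ1 _ (hhi_sub _ (List.getElem_mem hj))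
            rw [e1, e2]
            simp only [hghi] at h1
            omega

/-- There is a constant `C` such that for every `n ≥ 1` and positive weights
    `w 0, …, w (n-1)` with sum `W`, there is a full binary tree with exactly `n`
    leaves in which the `i`-th leaf has depth at most `C · (1 + log₂(W / w i))`. -/
theorem exists_weight_balanced_tree :
    ∃ C : ℕ, ∀ n : ℕ, 1 ≤ n → ∀ w : ℕ → ℕ, (∀ i < n, 0 < w i) →
      ∃ T : FullBinTree, (leafDepths T).length = n ∧
        ∀ i < n, (leafDepths T).getD i 0 ≤
          C * (1 + Nat.log 2 ((∑ j ∈ Finset.range n, w j) / w i)) := by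
  refine ⟨2, ?_⟩
  intro n hn w hw
  set W := ∑ j ∈ Finset.range n, w j with hW
  set ℓ : ℕ → ℕ := fun i => Nat.log 2 (W / w i) + 2 with hℓ
  set L : ℕ := 2 + (Finset.range n).sup (fun i => Nat.log 2 (W / w i)) with hLdef
  have hℓL : ∀ i < n, ℓ i ≤ L := by
    intro i hi
    have h : Nat.log 2 (W / w i) ≤ (Finset.range n).sup (fun j => Nat.log 2 (W / w j)) :=
      Finset.le_sup (f := fun j => Nat.log 2 (W / w j)) (Finset.mem_range.mpr hi)
    simp only [hℓ, hLdef]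
    omega
  set d : ℕ → ℕ := fun i => 2 ^ (L - ℓ i) with hd
  have hdpos : ∀ i, 0 < d i := fun i => Nat.two_pow_pos _
  set f : ℕ → ℕ := endsOf d with hf
  set a : ℕ → ℕ := fun i => alignUp (f i) (d i) with ha
  have hstep : ∀ i, f (i + 1) = a i + d i := fun i => rfl
  have hmono : Monotone f := by
    apply monotone_nat_of_le_succ
    intro i
    rw [hstep i]
    have h1 := le_alignUp (f i) (hdpos i)
    simp only [ha] at *
    omega
  have hsum : ∀ m, f m ≤ 2 * ∑ i ∈ Finset.range m, d i := by
    intro m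
    induction m with
    | zero => simp [hf, endsOf]
    | succ k ihk =>
      rw [hstep k, Finset.sum_range_succ]
      have := alignUp_le (f k) (hdpos k)
      simp only [ha] at *
      omega
  have hkey : ∀ i < n, 2 * (W + 1) * d i ≤ 2 ^ L * w i := by
    intro i hi
    have hwi := hw i hi
    have hdm := Nat.div_add_mod W (w i)
    have hml := Nat.mod_lt W hwi
    have h1 : W + 1 ≤ w i * (W / w i + 1) := by
      have e : w i * (W / w i + 1) = w i * (W / w i) + w i := by ring
      omega
    have h2 : W / w i < 2 ^ (Nat.log 2 (W / w i) + 1) :=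
      Nat.lt_pow_succ_log_self (by norm_num) _
    have h3 : 2 * (W + 1) ≤ w i * 2 ^ (ℓ i) := by
      have e : (2:ℕ) ^ (ℓ i) = 2 ^ (Nat.log 2 (W / w i) + 1) * 2 := by
        simp only [hℓ]
        rw [← pow_succ]
      rw [e]
      calc 2 * (W + 1) ≤ 2 * (w i * (W / w i + 1)) := by omega
        _ ≤ 2 * (w i * 2 ^ (Nat.log 2 (W / w i) + 1)) := by
            have := Nat.mul_le_mul_left (w i) (show W / w i + 1 ≤ 2 ^ (Nat.log 2 (W / w i) + 1) by omega)
            omega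
        _ = w i * (2 ^ (Nat.log 2 (W / w i) + 1) * 2) := by ring
    calc 2 * (W + 1) * d i ≤ w i * 2 ^ (ℓ i) * d i := Nat.mul_le_mul_right _ h3
      _ = w i * 2 ^ L := by
          simp only [hd]
          rw [mul_assoc, ← pow_add]
          congr 2
          have := hℓL i hi
          omega
      _ = 2 ^ L * w i := mul_comm _ _
  have hSum2 : 2 * (W + 1) * (∑ i ∈ Finset.range n, d i) ≤ 2 ^ L * W := by
    rw [Finset.mul_sum]
    calc ∑ i ∈ Finset.range n, 2 * (W + 1) * d i
        ≤ ∑ i ∈ Finset.range n, 2 ^ L * w i :=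
          Finset.sum_le_sum (fun i hi => hkey i (Finset.mem_range.mp hi))
      _ = 2 ^ L * W := by rw [← Finset.mul_sum]
  have hL1 : 2 * 2 ^ (L - 1) = 2 ^ L := by
    have e : L - 1 + 1 = L := by simp only [hLdef]; omega
    calc 2 * 2 ^ (L - 1) = 2 ^ (L - 1 + 1) := by rw [pow_succ]; ring
      _ = 2 ^ L := by rw [e]
  have hhalf : (∑ i ∈ Finset.range n, d i) ≤ 2 ^ (L - 1) := by
    by_contra hcon
    push_neg at hcon
    have h1 : 2 * (W + 1) * (2 ^ (L - 1) + 1) ≤ 2 * (W + 1) * (∑ i ∈ Finset.range n, d i) :=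
      Nat.mul_le_mul_left _ (by omega)
    have h2 : 2 ^ L * W < 2 * (W + 1) * (2 ^ (L - 1) + 1) := by
      have e : 2 * (W + 1) * (2 ^ (L - 1) + 1) = (2 * 2 ^ (L - 1)) * (W + 1) + 2 * (W + 1) := by
        ring
      rw [e, hL1]
      have e2 : 2 ^ L * (W + 1) = 2 ^ L * W + 2 ^ L := by ring
      omega
    omega
  have hfn : f n ≤ 2 ^ L := by
    have h1 := hsum n
    omega
  set ps : List (ℕ × ℕ) := (List.range n).map (fun i => (a i, ℓ i)) with hpsdef
  have hpslen : ps.length = n := by simp [hpsdef]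
  have hne : ps ≠ [] := by
    intro h
    rw [h] at hpslen
    simp at hpslen
    omega
  have hmem : ∀ p ∈ ps, p.2 ≤ L ∧ 2 ^ (L - p.2) ∣ p.1 ∧ p.1 + 2 ^ (L - p.2) ≤ 2 ^ L := by
    intro p hp
    obtain ⟨i, hi, rfl⟩ := List.mem_map.mp hp
    have hin : i < n := List.mem_range.mp hi
    refine ⟨hℓL i hin, dvd_alignUp _ _, ?_⟩
    calc a i + 2 ^ (L - ℓ i) = f (i + 1) := (hstep i).symm
      _ ≤ f n := hmono (by omega)
      _ ≤ 2 ^ L := hfn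
  have hpw : ps.Pairwise (fun p q => p.1 + 2 ^ (L - p.2) ≤ q.1) := by
    rw [hpsdef, List.pairwise_map]
    refine List.pairwise_lt_range.imp ?_
    intro i j hij
    calc a i + 2 ^ (L - ℓ i) = f (i + 1) := (hstep i).symm
      _ ≤ f j := hmono (by omega)
      _ ≤ a j := le_alignUp _ (hdpos j)
  obtain ⟨T, hlen, hbd⟩ := treeOfIntervals L ps hne hmem hpw
  refine ⟨T, by rw [hlen, hpslen], ?_⟩
  intro i hi
  have hilt : i < ps.length := by omega
  have h1 := hbd i hilt
  have e : ps.getD i (0, 0) = (a i, ℓ i) := by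
    rw [List.getD_eq_getElem _ _ hilt]
    simp [hpsdef]
  rw [e] at h1
  simp only [hℓ] at h1
  omega
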